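/- Under Assumptions 1 and 2, appending the complementarity constraint x ∘ s = 0 (the Hadamard product, i.e., x_j s_j = 0 for all j) changes neither optimal value: inf{(ĉ+c)^T x : Âx = b̂+b, x ≥ 0, Â^T y + s = ĉ+c, s ≥ 0, (b,c) ∈ U} = inf{(ĉ+c)^T x : Âx = b̂+b, x ≥ 0, Â^T y + s = ĉ+c, s ≥ 0, x ∘ s = 0, (b,c) ∈ U}, and sup{(b̂+b)^T y : Âx = b̂+b, x ≥ 0, Â^T y + s = ĉ+c, s ≥ 0, (b,c) ∈ U} = sup{(b̂+b)^T y : Âx = b̂+b, x ≥ 0, Â^T y + s = ĉ+c, s ≥ 0, x ∘ s = 0, (b,c) ∈ U}. -/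

import Mathlib

open Matrix

/-- The perturbed primal feasible set `P(b) = {x : Âx = b̂ + b, x ≥ 0}`. -/
def Pfeas (m n : ℕ) (Ahat : Matrix (Fin m) (Fin n) ℝ) (bhat b : Fin m → ℝ) :
    Set (Fin n → ℝ) :=
  {x | Ahat.mulVec x = bhat + b ∧ 0 ≤ x}

/-- The perturbed dual feasible set `D(c) = {(y,s) : Âᵀy + s = ĉ + c, s ≥ 0}`. -/
def Dfeas (m n : ℕ) (Ahat : Matrix (Fin m) (Fin n) ℝ) (chat c : Fin n → ℝ) :
    Set ((Fin m → ℝ) × (Fin n → ℝ)) :=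
  {ys | Ahat.transpose.mulVec ys.1 + ys.2 = chat + c ∧ 0 ≤ ys.2}

/-- The perturbed optimal value `p(b,c)` as an extended real number
(`sInf ∅ = +∞` in `EReal`). -/
noncomputable def pval (m n : ℕ) (Ahat : Matrix (Fin m) (Fin n) ℝ)
    (bhat b : Fin m → ℝ) (chat c : Fin n → ℝ) : EReal :=
  sInf ((fun x => (((chat + c) ⬝ᵥ x : ℝ) : EReal)) '' Pfeas m n Ahat bhat b)

/-- The restricted uncertainty set `Ū = {(b,c) ∈ U : P(b) ≠ ∅, D(c) ≠ ∅}`. -/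
def Ubar (m n : ℕ) (Ahat : Matrix (Fin m) (Fin n) ℝ) (bhat : Fin m → ℝ)
    (chat : Fin n → ℝ) (U : Set ((Fin m → ℝ) × (Fin n → ℝ))) :
    Set ((Fin m → ℝ) × (Fin n → ℝ)) :=
  {bc ∈ U | (Pfeas m n Ahat bhat bc.1).Nonempty ∧ (Dfeas m n Ahat chat bc.2).Nonempty}

section AuxLP

open Matrix Bornology Filter Topology

section Slice
variable {E F : Type*} [NormedAddCommGroup E] [NormedSpace ℝ E]
  [NormedAddCommGroup F] [NormedSpace ℝ F]

lemma recession_of_bounded (L : E →ₗ[ℝ] F) (K : Set E)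
    (hKadd : ∀ x ∈ K, ∀ y ∈ K, x + y ∈ K)
    (hKsmul : ∀ (t : ℝ), 0 ≤ t → ∀ x ∈ K, t • x ∈ K) {v0 : F}
    (hne : ∃ x ∈ K, L x = v0) (hbd : IsBounded {x | x ∈ K ∧ L x = v0}) :
    ∀ d ∈ K, L d = 0 → d = 0 := by
  obtain ⟨x0, hx0K, hx0⟩ := hne
  obtain ⟨M, hM⟩ := isBounded_iff_forall_norm_le.mp hbd
  have hMx : ‖x0‖ ≤ M := hM x0 ⟨hx0K, hx0⟩
  intro d hdK hLd
  by_contra hd0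
  have hdn : 0 < ‖d‖ := norm_pos_iff.mpr hd0
  set t : ℝ := (M + ‖x0‖ + 1) / ‖d‖ with ht
  have ht0 : 0 ≤ t := div_nonneg (by linarith [norm_nonneg x0]) hdn.le
  have hmem : x0 + t • d ∈ K := hKadd x0 hx0K _ (hKsmul t ht0 d hdK)
  have hLmem : L (x0 + t • d) = v0 := by rw [map_add, _root_.map_smul, hLd, smul_zero, add_zero, hx0]
  have h1 : ‖x0 + t • d‖ ≤ M := hM _ ⟨hmem, hLmem⟩
  have h2 : ‖t • d‖ ≤ ‖x0 + t • d‖ + ‖x0‖ := by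
    have := norm_sub_le (x0 + t • d) x0
    simpa using this
  rw [norm_smul, Real.norm_eq_abs, abs_of_nonneg ht0, ht,
    div_mul_cancel₀ _ hdn.ne'] at h2
  linarith

lemma bounded_of_recession [FiniteDimensional ℝ E] (L : E →ₗ[ℝ] F) (K : Set E)
    (hKclosed : IsClosed K) (hKsmul : ∀ (t : ℝ), 0 ≤ t → ∀ x ∈ K, t • x ∈ K)
    (hrec : ∀ d ∈ K, L d = 0 → d = 0) (v : F) :
    IsBounded {x | x ∈ K ∧ L x = v} := by
  by_contra hbd
  rw [isBounded_iff_forall_norm_le] at hbd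
  push_neg at hbd
  have hx : ∀ k : ℕ, ∃ x, (x ∈ K ∧ L x = v) ∧ (k : ℝ) < ‖x‖ := by
    intro k; obtain ⟨x, hx, h⟩ := hbd k; exact ⟨x, hx, h⟩
  choose x hxmem hxn using hx
  have hxpos : ∀ k, 0 < ‖x k‖ := fun k => lt_of_le_of_lt (Nat.cast_nonneg k) (hxn k)
  set u : ℕ → E := fun k => ‖x k‖⁻¹ • x k with hu
  have husphere : ∀ k, u k ∈ Metric.sphere (0:E) 1 := by
    intro k
    simp [u, norm_smul, abs_of_nonneg (inv_nonneg.mpr (hxpos k).le),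
      inv_mul_cancel₀ (hxpos k).ne']
  obtain ⟨d, hds, φ, hφ, hconv⟩ := (isCompact_sphere (0:E) 1).tendsto_subseq husphere
  have hdK : d ∈ K := hKclosed.mem_of_tendsto hconv (Eventually.of_forall fun k =>
    hKsmul _ (inv_nonneg.mpr (hxpos _).le) _ (hxmem _).1)
  have hcont : Continuous L := L.continuous_of_finiteDimensional
  have h1 : Tendsto (fun k => L (u (φ k))) atTop (nhds (L d)) := (hcont.tendsto d).comp hconv
  have hmono : ∀ k : ℕ, (k : ℝ) ≤ ‖x (φ k)‖ := fun k =>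
    le_trans (Nat.cast_le.mpr hφ.le_apply) (hxn (φ k)).le
  have hnorminf : Tendsto (fun k => ‖x (φ k)‖) atTop atTop :=
    tendsto_atTop_mono hmono tendsto_natCast_atTop_atTop
  have hinv0 : Tendsto (fun k => ‖x (φ k)‖⁻¹) atTop (nhds 0) := hnorminf.inv_tendsto_atTop
  have h2 : ∀ k, L (u (φ k)) = ‖x (φ k)‖⁻¹ • v := by
    intro k; simp [u, _root_.map_smul, (hxmem (φ k)).2]
  have h3 : Tendsto (fun k => L (u (φ k))) atTop (nhds 0) := by
    simp only [h2]
    simpa using hinv0.smul_const v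
  have hLd : L d = 0 := tendsto_nhds_unique h1 h3
  have : d = 0 := hrec d hdK hLd
  rw [this] at hds
  simp at hds

end Slice
section Cone

variable {ι : Type*} [Fintype ι] [DecidableEq ι] {N : ℕ}

/-- The finitely generated cone of the family `g`. -/
def coneOf (g : ι → (Fin N → ℝ)) : Set (Fin N → ℝ) :=
  {z | ∃ l : ι → ℝ, 0 ≤ l ∧ z = ∑ i, l i • g i}

lemma isClosed_nonnegPi (κ : Type*) [Fintype κ] : IsClosed {x : κ → ℝ | 0 ≤ x} := by
  have : {x : κ → ℝ | 0 ≤ x} = ⋂ i, (fun x : κ → ℝ => x i) ⁻¹' Set.Ici 0 := by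
    ext x; simp [Pi.le_def]
  rw [this]
  exact isClosed_iInter fun i => isClosed_Ici.preimage (continuous_apply i)

/-- Conic Carathéodory. -/
lemma carath (g : ι → (Fin N → ℝ)) :
    ∀ (M : ℕ) (l : ι → ℝ), 0 ≤ l → (Finset.univ.filter fun i => l i ≠ 0).card ≤ M →
    ∃ (S : Finset ι) (μ : ι → ℝ), LinearIndependent ℝ (fun i : S => g (i : ι)) ∧ 0 ≤ μ ∧
      (∀ i ∉ S, μ i = 0) ∧ ∑ i, μ i • g i = ∑ i, l i • g i := by
  intro M
  induction M with
  | zero =>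
    intro l hl hcard
    have hS0 : (Finset.univ.filter fun i => l i ≠ 0) = ∅ :=
      Finset.card_eq_zero.mp (Nat.le_zero.mp hcard)
    have hl0 : ∀ i, l i = 0 := by
      intro i
      by_contra h
      have : i ∈ (Finset.univ.filter fun i => l i ≠ 0) :=
        Finset.mem_filter.mpr ⟨Finset.mem_univ i, h⟩
      rw [hS0] at this
      exact absurd this (Finset.notMem_empty i)
    haveI : IsEmpty {x : ι // x ∈ (∅ : Finset ι)} := ⟨fun i => absurd i.2 (Finset.notMem_empty _)⟩
    exact ⟨∅, l, linearIndependent_empty_type, hl, fun i _ => hl0 i, rfl⟩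
  | succ M ih =>
    intro l hl hcard
    set S0 : Finset ι := Finset.univ.filter fun i => l i ≠ 0 with hS0
    by_cases hLI : LinearIndependent ℝ (fun i : S0 => g (i : ι))
    · refine ⟨S0, l, hLI, hl, ?_, rfl⟩
      intro i hi
      by_contra h
      exact hi (Finset.mem_filter.mpr ⟨Finset.mem_univ i, h⟩)
    · obtain ⟨f, hfsum, i0, hfi0⟩ := Fintype.not_linearIndependent_iff.mp hLI
      set h0 : ι → ℝ := fun i => if hi : i ∈ S0 then f ⟨i, hi⟩ else 0 with hh0
      have hsupp : ∀ i ∉ S0, h0 i = 0 := fun i hi => dif_neg hi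
      have hh0sum : ∑ i, h0 i • g i = 0 := by
        rw [← Finset.sum_subset (Finset.subset_univ S0)]
        · rw [← Finset.sum_coe_sort S0 (fun i => h0 i • g i), ← hfsum]
          refine Finset.sum_congr rfl fun i _ => ?_
          simp only [hh0, dif_pos i.2, Subtype.coe_eta]
        · intro i _ hi; rw [hsupp i hi, zero_smul]
      have hex : ∃ h : ι → ℝ, (∀ i ∉ S0, h i = 0) ∧ (∑ i, h i • g i = 0) ∧ ∃ i, 0 < h i := by
        by_cases hpos : ∃ i, 0 < h0 i
        · exact ⟨h0, hsupp, hh0sum, hpos⟩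
        · push_neg at hpos
          have h1 : h0 i0 ≠ 0 := by
            simp only [hh0, dif_pos i0.2, Subtype.coe_eta]; exact hfi0
          refine ⟨-h0, fun i hi => by simp [hsupp i hi], ?_, ⟨i0, ?_⟩⟩
          · simp [neg_smul, Finset.sum_neg_distrib, hh0sum]
          · have h2 := hpos i0
            have h3 : h0 i0 < 0 := lt_of_le_of_ne h2 h1
            simpa using h3
      obtain ⟨h, hhsupp, hhsum, iw, hiw⟩ := hex
      set Tp : Finset ι := Finset.univ.filter fun i => 0 < h i with hTp
      have hiwT : iw ∈ Tp := Finset.mem_filter.mpr ⟨Finset.mem_univ iw, hiw⟩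
      obtain ⟨j0, hj0T, hj0min⟩ := Tp.exists_min_image (fun i => l i / h i) ⟨iw, hiwT⟩
      have hj0pos : 0 < h j0 := (Finset.mem_filter.mp hj0T).2
      set t : ℝ := l j0 / h j0 with htdef
      have ht0 : 0 ≤ t := div_nonneg (hl j0) hj0pos.le
      set l' : ι → ℝ := fun i => l i - t * h i with hl'
      have hl'0 : 0 ≤ l' := by
        intro i
        show (0 : ℝ) ≤ l i - t * h i
        have hli : (0 : ℝ) ≤ l i := hl i
        rcases le_or_gt (h i) 0 with hhi | hhi
        · nlinarith
        · have hiT : i ∈ Tp := Finset.mem_filter.mpr ⟨Finset.mem_univ i, hhi⟩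
          have h4 := hj0min i hiT
          have h5 : t * h i ≤ l i := by
            calc t * h i ≤ l i / h i * h i := mul_le_mul_of_nonneg_right h4 hhi.le
              _ = l i := div_mul_cancel₀ _ hhi.ne'
          linarith
      have hsum' : ∑ i, l' i • g i = ∑ i, l i • g i := by
        have e1 : ∀ x, (t * h x) • g x = t • (h x • g x) := fun x => mul_smul t (h x) (g x)
        simp only [hl', sub_smul, Finset.sum_sub_distrib, e1, ← Finset.smul_sum, hhsum,
          smul_zero, sub_zero]
      have hsub : (Finset.univ.filter fun i => l' i ≠ 0) ⊆ S0.erase j0 := by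
        intro i hi
        have hi' := (Finset.mem_filter.mp hi).2
        rw [Finset.mem_erase]
        constructor
        · rintro rfl
          exact hi' (by show l i - t * h i = 0; rw [htdef, div_mul_cancel₀ _ hj0pos.ne', sub_self])
        · by_contra hiS
          have hli : l i = 0 := by
            by_contra h'
            exact hiS (Finset.mem_filter.mpr ⟨Finset.mem_univ i, h'⟩)
          exact hi' (by show l i - t * h i = 0; rw [hli, hhsupp i hiS, mul_zero, sub_zero])
      have hj0S0 : j0 ∈ S0 := by
        by_contra hj
        rw [hhsupp j0 hj] at hj0pos
        exact lt_irrefl 0 hj0pos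
      have hcard' : (Finset.univ.filter fun i => l' i ≠ 0).card ≤ M := by
        have h1 : (Finset.univ.filter fun i => l' i ≠ 0).card ≤ (S0.erase j0).card :=
          Finset.card_le_card hsub
        have h2 : (S0.erase j0).card = S0.card - 1 := Finset.card_erase_of_mem hj0S0
        have h3 : 0 < S0.card := Finset.card_pos.mpr ⟨j0, hj0S0⟩
        omega
      obtain ⟨S, μ, hS1, hS2, hS3, hS4⟩ := ih l' hl'0 hcard'
      exact ⟨S, μ, hS1, hS2, hS3, by rw [hS4, hsum']⟩

end Cone
open Matrix Bornology Filter

section ConeClosed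

variable {ι : Type*} [Fintype ι] [DecidableEq ι] {N : ℕ}

lemma isClosed_piece (g : ι → (Fin N → ℝ)) (S : Finset ι)
    (hLI : LinearIndependent ℝ (fun i : S => g (i : ι))) :
    IsClosed {z : Fin N → ℝ | ∃ μ : ι → ℝ, 0 ≤ μ ∧ (∀ i ∉ S, μ i = 0) ∧ z = ∑ i, μ i • g i} := by
  classical
  set T : ({x : ι // x ∈ S} → ℝ) →ₗ[ℝ] (Fin N → ℝ) :=
    { toFun := fun ν => ∑ i : {x : ι // x ∈ S}, ν i • g (i : ι)
      map_add' := by intro a b; simp [add_smul, Finset.sum_add_distrib]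
      map_smul' := by
        intro c a
        simp only [Pi.smul_apply, smul_eq_mul, RingHom.id_apply, Finset.smul_sum]
        exact Finset.sum_congr rfl fun i _ => (mul_smul c (a i) (g (i:ι))) } with hT
  have hker : LinearMap.ker T = ⊥ := by
    rw [LinearMap.ker_eq_bot']
    intro ν hν
    funext i
    exact Fintype.linearIndependent_iff.mp hLI ν hν i
  have hemb : IsClosedEmbedding T := LinearMap.isClosedEmbedding_of_injective hker
  have himg : {z : Fin N → ℝ | ∃ μ : ι → ℝ, 0 ≤ μ ∧ (∀ i ∉ S, μ i = 0) ∧ z = ∑ i, μ i • g i}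
      = T '' {ν : {x : ι // x ∈ S} → ℝ | 0 ≤ ν} := by
    ext z
    constructor
    · rintro ⟨μ, hμ0, hμsupp, rfl⟩
      refine ⟨fun i => μ i, fun i => hμ0 i, ?_⟩
      show ∑ i : {x : ι // x ∈ S}, μ i • g (i : ι) = ∑ i, μ i • g i
      rw [Finset.sum_coe_sort S (fun i => μ i • g i)]
      rw [← Finset.sum_subset (Finset.subset_univ S)]
      intro i _ hi; rw [hμsupp i hi, zero_smul]
    · rintro ⟨ν, hν0, rfl⟩
      refine ⟨fun i => if hi : i ∈ S then ν ⟨i, hi⟩ else 0, ?_, fun i hi => dif_neg hi, ?_⟩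
      · intro i
        show (0:ℝ) ≤ if hi : i ∈ S then ν ⟨i, hi⟩ else 0
        by_cases hi : i ∈ S
        · rw [dif_pos hi]; exact hν0 _
        · rw [dif_neg hi]
      · show T ν = ∑ i : ι, (if hi : i ∈ S then ν ⟨i, hi⟩ else 0) • g i
        rw [← Finset.sum_subset (Finset.subset_univ S)
          (fun i _ hi => by rw [dif_neg hi, zero_smul])]
        rw [← Finset.sum_coe_sort S]
        exact Finset.sum_congr rfl fun i _ => by simp only [dif_pos i.2, Subtype.coe_eta]
  rw [himg]
  exact hemb.isClosedMap _ (isClosed_nonnegPi _)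

lemma isClosed_coneOf (g : ι → (Fin N → ℝ)) : IsClosed (coneOf g) := by
  classical
  have hcover : coneOf g = ⋃ (p : {S : Finset ι // LinearIndependent ℝ (fun i : S => g (i : ι))}),
      {z : Fin N → ℝ | ∃ μ : ι → ℝ, 0 ≤ μ ∧ (∀ i ∉ p.1, μ i = 0) ∧ z = ∑ i, μ i • g i} := by
    ext z
    constructor
    · rintro ⟨l, hl, rfl⟩
      obtain ⟨S, μ, hS1, hS2, hS3, hS4⟩ := carath g (Finset.univ.filter fun i => l i ≠ 0).card l hl le_rfl
      exact Set.mem_iUnion.mpr ⟨⟨S, hS1⟩, μ, hS2, hS3, hS4.symm⟩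
    · intro hz
      obtain ⟨p, μ, hμ0, _, hsum⟩ := Set.mem_iUnion.mp hz
      exact ⟨μ, hμ0, hsum⟩
  rw [hcover]
  exact isClosed_iUnion_of_finite fun p => isClosed_piece g p.1 p.2

lemma coneOf_convex (g : ι → (Fin N → ℝ)) : Convex ℝ (coneOf g) := by
  rintro z1 ⟨l1, hl1, rfl⟩ z2 ⟨l2, hl2, rfl⟩ a b ha hb _
  refine ⟨fun i => a * l1 i + b * l2 i, ?_, ?_⟩
  · intro i
    exact add_nonneg (mul_nonneg ha (hl1 i)) (mul_nonneg hb (hl2 i))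
  · simp only [add_smul, Finset.sum_add_distrib, mul_smul, ← Finset.smul_sum]

lemma coneOf_smul_mem (g : ι → (Fin N → ℝ)) {z : Fin N → ℝ} (hz : z ∈ coneOf g) {t : ℝ}
    (ht : 0 ≤ t) : t • z ∈ coneOf g := by
  obtain ⟨l, hl, rfl⟩ := hz
  exact ⟨fun i => t * l i, fun i => mul_nonneg ht (hl i),
    by simp only [Finset.smul_sum, mul_smul]⟩

lemma coneOf_gen_mem (g : ι → (Fin N → ℝ)) (i : ι) : g i ∈ coneOf g := by
  classical
  refine ⟨fun j => if j = i then 1 else 0, fun j => by dsimp only; positivity, ?_⟩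
  simp [ite_smul]

lemma coneOf_zero_mem (g : ι → (Fin N → ℝ)) : (0 : Fin N → ℝ) ∈ coneOf g :=
  ⟨0, le_rfl, by simp⟩

/-- A continuous linear functional on `Fin N → ℝ` is a dot product. -/
lemma clm_eq_dot (f : (Fin N → ℝ) →L[ℝ] ℝ) (y : Fin N → ℝ) :
    f y = (fun j => f (Pi.single j 1)) ⬝ᵥ y := by
  have hy : y = ∑ j, Pi.single j (y j) := (Finset.univ_sum_single y).symm
  have hsingle : ∀ j, Pi.single j (y j) = y j • (Pi.single j 1 : Fin N → ℝ) := by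
    intro j
    funext j'
    by_cases h : j' = j <;> simp [Pi.single_apply, h]
  conv_lhs => rw [hy]
  rw [map_sum]
  simp only [hsingle, _root_.map_smul, smul_eq_mul]
  simp [dotProduct, mul_comm]

/-- Farkas: if every vector that pairs nonpositively with all the generators also pairs
nonpositively with `c`, then `c` is in the cone. -/
lemma mem_of_dual (g : ι → (Fin N → ℝ)) (c : Fin N → ℝ)
    (h : ∀ d : Fin N → ℝ, (∀ i, d ⬝ᵥ g i ≤ 0) → d ⬝ᵥ c ≤ 0) : c ∈ coneOf g := by
  by_contra hc
  obtain ⟨f, u, hfu, huc⟩ :=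
    geometric_hahn_banach_closed_point (coneOf_convex g) (isClosed_coneOf g) hc
  have hu0 : 0 < u := by
    have := hfu 0 (coneOf_zero_mem g)
    rw [map_zero] at this
    exact this
  have hfle : ∀ z ∈ coneOf g, f z ≤ 0 := by
    intro z hz
    by_contra hfz
    push_neg at hfz
    have hmem : (u / f z + 1) • z ∈ coneOf g :=
      coneOf_smul_mem g hz (by positivity)
    have := hfu _ hmem
    rw [_root_.map_smul, smul_eq_mul] at this
    have h2 : (u / f z + 1) * f z = u + f z := by field_simp
    rw [h2] at this
    linarith
  set d : Fin N → ℝ := fun j => f (Pi.single j 1) with hd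
  have hdg : ∀ i, d ⬝ᵥ g i ≤ 0 := fun i => by
    rw [← clm_eq_dot f (g i)]; exact hfle _ (coneOf_gen_mem g i)
  have hdc : d ⬝ᵥ c ≤ 0 := h d hdg
  rw [← clm_eq_dot f c] at hdc
  linarith

end ConeClosed

section LP

variable {m n : ℕ}

lemma weak_duality (A : Matrix (Fin m) (Fin n) ℝ) {bt : Fin m → ℝ} {ct : Fin n → ℝ}
    {x : Fin n → ℝ} {y : Fin m → ℝ} {s : Fin n → ℝ}
    (hx : A.mulVec x = bt) (hxpos : 0 ≤ x) (hys : A.transpose.mulVec y + s = ct) (hs : 0 ≤ s) :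
    bt ⬝ᵥ y ≤ ct ⬝ᵥ x := by
  have h1 : ct ⬝ᵥ x = (A.transpose.mulVec y) ⬝ᵥ x + s ⬝ᵥ x := by
    rw [← hys, add_dotProduct]
  have h2 : (A.transpose.mulVec y) ⬝ᵥ x = bt ⬝ᵥ y := by
    rw [Matrix.mulVec_transpose, ← Matrix.dotProduct_mulVec, hx, dotProduct_comm]
  have h3 : 0 ≤ s ⬝ᵥ x := Finset.sum_nonneg fun i _ => mul_nonneg (hs i) (hxpos i)
  linarith

lemma comp_value_eq (A : Matrix (Fin m) (Fin n) ℝ) {bt : Fin m → ℝ} {ct : Fin n → ℝ}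
    {x : Fin n → ℝ} {y : Fin m → ℝ} {s : Fin n → ℝ}
    (hx : A.mulVec x = bt) (hys : A.transpose.mulVec y + s = ct)
    (hcomp : ∀ j, x j * s j = 0) :
    ct ⬝ᵥ x = bt ⬝ᵥ y := by
  have h1 : ct ⬝ᵥ x = (A.transpose.mulVec y) ⬝ᵥ x + s ⬝ᵥ x := by
    rw [← hys, add_dotProduct]
  have h2 : (A.transpose.mulVec y) ⬝ᵥ x = bt ⬝ᵥ y := by
    rw [Matrix.mulVec_transpose, ← Matrix.dotProduct_mulVec, hx, dotProduct_comm]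
  have h3 : s ⬝ᵥ x = 0 := by
    rw [dotProduct_comm]
    exact Finset.sum_eq_zero fun j _ => hcomp j
  rw [h1, h2, h3, add_zero]

lemma exists_comp (A : Matrix (Fin m) (Fin n) ℝ) (bt : Fin m → ℝ) (ct : Fin n → ℝ)
    (hrec : (∀ d : Fin n → ℝ, 0 ≤ d → A.mulVec d = 0 → d = 0) ∨
      (∀ p : (Fin m → ℝ) × (Fin n → ℝ), 0 ≤ p.2 → A.transpose.mulVec p.1 + p.2 = 0 → p = 0))
    (hP : ∃ x : Fin n → ℝ, A.mulVec x = bt ∧ 0 ≤ x)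
    (hD : ∃ ys : (Fin m → ℝ) × (Fin n → ℝ), A.transpose.mulVec ys.1 + ys.2 = ct ∧ 0 ≤ ys.2) :
    ∃ (x : Fin n → ℝ) (y : Fin m → ℝ) (s : Fin n → ℝ),
      A.mulVec x = bt ∧ 0 ≤ x ∧ A.transpose.mulVec y + s = ct ∧ 0 ≤ s ∧ ∀ j, x j * s j = 0 := by
  classical
  rcases hrec with hrec | hrec
  · -- primal feasible set is compact: minimize the primal objective
    set K : Set (Fin n → ℝ) := {x | 0 ≤ x} with hK
    set L := A.mulVecLin with hL
    have hKc : IsClosed K := isClosed_nonnegPi _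
    have hKs : ∀ (t : ℝ), 0 ≤ t → ∀ x ∈ K, t • x ∈ K := fun t ht x hx => show 0 ≤ t • x from smul_nonneg ht hx
    have hbd : IsBounded {x | x ∈ K ∧ L x = bt} :=
      bounded_of_recession L K hKc hKs
        (fun d hd hLd => hrec d hd (by simpa [hL, Matrix.mulVecLin_apply] using hLd)) bt
    have hclosed : IsClosed {x | x ∈ K ∧ L x = bt} := by
      have he : {x | x ∈ K ∧ L x = bt} = K ∩ (⇑L ⁻¹' {bt}) := rfl
      rw [he]
      exact hKc.inter ((isClosed_singleton).preimage L.continuous_of_finiteDimensional)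
    have hcompact : IsCompact {x | x ∈ K ∧ L x = bt} :=
      Metric.isCompact_of_isClosed_isBounded hclosed hbd
    obtain ⟨x0, hx0A, hx0p⟩ := hP
    have hne : {x | x ∈ K ∧ L x = bt}.Nonempty :=
      ⟨x0, hx0p, by simpa [hL, Matrix.mulVecLin_apply] using hx0A⟩
    have hcont : Continuous fun x : Fin n → ℝ => ct ⬝ᵥ x := by
      unfold dotProduct
      exact continuous_finset_sum _ fun j _ => continuous_const.mul (continuous_apply j)
    obtain ⟨xs, hxsmem, hxsmin'⟩ := hcompact.exists_isMinOn hne hcont.continuousOn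
    have hxsmin : ∀ x' ∈ {x | x ∈ K ∧ L x = bt}, ct ⬝ᵥ xs ≤ ct ⬝ᵥ x' := fun x' hx' => hxsmin' hx'
    have hxsA : A.mulVec xs = bt := by
      have := hxsmem.2; simpa [hL, Matrix.mulVecLin_apply] using this
    have hxsp : 0 ≤ xs := hxsmem.1
    -- Farkas certificate for optimality
    set g : (Fin m ⊕ (Fin m ⊕ Fin n)) → (Fin n → ℝ) :=
      Sum.elim (fun i => fun j => A i j)
        (Sum.elim (fun i => fun j => -A i j)
          (fun j' => if xs j' = 0 then (Pi.single j' 1 : Fin n → ℝ) else 0)) with hg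
    have hct : ct ∈ coneOf g := by
      apply mem_of_dual
      intro d hd
      have hAd : A.mulVec d = 0 := by
        funext i
        have h1 := hd (Sum.inl i)
        have h2 := hd (Sum.inr (Sum.inl i))
        simp only [hg, Sum.elim_inl, Sum.elim_inr] at h1 h2
        have e1 : d ⬝ᵥ (fun j => A i j) = (A.mulVec d) i := by
          simp [Matrix.mulVec, dotProduct, mul_comm]
        have e2 : d ⬝ᵥ (fun j => -A i j) = -(A.mulVec d) i := by
          simp [Matrix.mulVec, dotProduct, mul_comm]
        rw [e1] at h1
        rw [e2] at h2
        have : (A.mulVec d) i = 0 := le_antisymm h1 (by linarith)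
        simpa using this
      have hdneg : ∀ j, xs j = 0 → d j ≤ 0 := by
        intro j hj
        have h3 := hd (Sum.inr (Sum.inr j))
        simp only [hg, Sum.elim_inr, hj, if_pos] at h3
        simpa [dotProduct_single] using h3
      by_contra hpos
      push_neg at hpos
      set Tp : Finset (Fin n) := Finset.univ.filter fun j => 0 < d j with hTp
      have hxspos : ∀ j ∈ Tp, 0 < xs j := by
        intro j hj
        have hdj : 0 < d j := (Finset.mem_filter.mp hj).2
        rcases eq_or_lt_of_le (hxsp j) with h | h
        · exact absurd hdj (not_lt.mpr (hdneg j h.symm))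
        · exact h
      set ε : ℝ := if hTpne : Tp.Nonempty then Tp.inf' hTpne (fun j => xs j / d j) else 1 with hε
      have hεpos : 0 < ε := by
        by_cases hTpne : Tp.Nonempty
        · rw [hε, dif_pos hTpne]
          rw [Finset.lt_inf'_iff]
          intro j hj
          exact div_pos (hxspos j hj) ((Finset.mem_filter.mp hj).2)
        · rw [hε, dif_neg hTpne]; norm_num
      have hεle : ∀ j ∈ Tp, ε * d j ≤ xs j := by
        intro j hj
        have hdj : 0 < d j := (Finset.mem_filter.mp hj).2
        have h5 : ε ≤ xs j / d j := by
          rw [hε, dif_pos ⟨j, hj⟩]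
          exact Finset.inf'_le _ hj
        calc ε * d j ≤ (xs j / d j) * d j := mul_le_mul_of_nonneg_right h5 hdj.le
          _ = xs j := div_mul_cancel₀ _ hdj.ne'
      set x' : Fin n → ℝ := xs - ε • d with hx'
      have hx'K : x' ∈ K := by
        intro j
        show (0 : ℝ) ≤ xs j - ε * d j
        rcases le_or_gt (d j) 0 with h6 | h6
        · have : ε * d j ≤ 0 := mul_nonpos_of_nonneg_of_nonpos hεpos.le h6
          have := hxsp j
          have h7 : (0:ℝ) ≤ xs j := this
          linarith
        · have hjT : j ∈ Tp := Finset.mem_filter.mpr ⟨Finset.mem_univ j, h6⟩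
          linarith [hεle j hjT]
      have hLx' : L x' = bt := by
        rw [hx', map_sub, _root_.map_smul]
        have h8 : L d = 0 := by
          show A.mulVecLin d = 0
          rw [Matrix.mulVecLin_apply, hAd]
        rw [h8, smul_zero, sub_zero]
        simpa [hL, Matrix.mulVecLin_apply] using hxsA
      have hmin := hxsmin x' ⟨hx'K, hLx'⟩
      have hvals : ct ⬝ᵥ x' = ct ⬝ᵥ xs - ε * (ct ⬝ᵥ d) := by
        rw [hx', dotProduct_sub, dotProduct_smul, smul_eq_mul]
      have hcd : 0 < ct ⬝ᵥ d := by rwa [dotProduct_comm] at hpos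
      have : 0 < ε * (ct ⬝ᵥ d) := mul_pos hεpos hcd
      rw [hvals] at hmin
      linarith
    obtain ⟨l, hl0, hlsum⟩ := hct
    refine ⟨xs, fun i => l (Sum.inl i) - l (Sum.inr (Sum.inl i)),
      fun j => if xs j = 0 then l (Sum.inr (Sum.inr j)) else 0, hxsA, hxsp, ?_, ?_, ?_⟩
    · funext j
      have hctj := congrFun hlsum j
      simp only [Finset.sum_apply, Pi.smul_apply, smul_eq_mul, Fintype.sum_sum_type, hg,
        Sum.elim_inl, Sum.elim_inr] at hctj
      have h3 : ∑ j' : Fin n, l (Sum.inr (Sum.inr j')) *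
          (if xs j' = 0 then (Pi.single j' 1 : Fin n → ℝ) else 0) j
          = (if xs j = 0 then l (Sum.inr (Sum.inr j)) else 0) := by
        rw [Finset.sum_eq_single j]
        · split
          · simp [Pi.single_apply]
          · simp
        · intro j' _ hj'
          split
          · simp [Pi.single_apply, Ne.symm hj']
          · simp
        · intro h; exact absurd (Finset.mem_univ j) h
      rw [h3] at hctj
      have h4 : (A.transpose.mulVec fun i => l (Sum.inl i) - l (Sum.inr (Sum.inl i))) j
          = ∑ i, l (Sum.inl i) * A i j - ∑ i, l (Sum.inr (Sum.inl i)) * A i j := by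
        simp only [Matrix.mulVec, dotProduct, Matrix.transpose_apply, mul_sub,
          Finset.sum_sub_distrib]
        congr 1 <;> exact Finset.sum_congr rfl fun i _ => mul_comm _ _
      show (A.transpose.mulVec fun i => l (Sum.inl i) - l (Sum.inr (Sum.inl i))) j
          + (if xs j = 0 then l (Sum.inr (Sum.inr j)) else 0) = ct j
      have h5 : ∑ x : Fin m, l (Sum.inr (Sum.inl x)) * -A x j
          = -∑ x : Fin m, l (Sum.inr (Sum.inl x)) * A x j := by
        simp [mul_neg]
      rw [h4, hctj, h5]
      ring
    · intro j
      show (0:ℝ) ≤ if xs j = 0 then l (Sum.inr (Sum.inr j)) else 0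
      split
      · exact hl0 _
      · exact le_rfl
    · intro j
      show xs j * (if xs j = 0 then l (Sum.inr (Sum.inr j)) else 0) = 0
      split
      · simp [*]
      · simp
  · -- dual feasible set is compact: maximize the dual objective
    set K : Set ((Fin m → ℝ) × (Fin n → ℝ)) := {p | 0 ≤ p.2} with hK
    set L : ((Fin m → ℝ) × (Fin n → ℝ)) →ₗ[ℝ] (Fin n → ℝ) :=
      A.transpose.mulVecLin.comp (LinearMap.fst ℝ _ _) + LinearMap.snd ℝ _ _ with hL
    have hLapp : ∀ p : (Fin m → ℝ) × (Fin n → ℝ), L p = A.transpose.mulVec p.1 + p.2 := by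
      intro p
      simp [hL, Matrix.mulVecLin_apply, Matrix.mulVec_transpose]
    have hKc : IsClosed K := (isClosed_nonnegPi (Fin n)).preimage continuous_snd
    have hKs : ∀ (t : ℝ), 0 ≤ t → ∀ p ∈ K, t • p ∈ K := by
      intro t ht p hp
      show 0 ≤ (t • p).2
      rw [Prod.smul_snd]
      exact smul_nonneg ht hp
    have hbd : IsBounded {p | p ∈ K ∧ L p = ct} :=
      bounded_of_recession L K hKc hKs
        (fun p hp hLp => hrec p hp (by rw [← hLapp p]; exact hLp)) ct
    have hclosed : IsClosed {p | p ∈ K ∧ L p = ct} := by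
      have he : {p | p ∈ K ∧ L p = ct} = K ∩ (⇑L ⁻¹' {ct}) := rfl
      rw [he]
      exact hKc.inter ((isClosed_singleton).preimage L.continuous_of_finiteDimensional)
    have hcompact : IsCompact {p | p ∈ K ∧ L p = ct} :=
      Metric.isCompact_of_isClosed_isBounded hclosed hbd
    obtain ⟨p0, hp0A, hp0p⟩ := hD
    have hne : {p | p ∈ K ∧ L p = ct}.Nonempty := ⟨p0, hp0p, by rw [hLapp]; exact hp0A⟩
    have hcont : Continuous fun p : (Fin m → ℝ) × (Fin n → ℝ) => bt ⬝ᵥ p.1 := by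
      unfold dotProduct
      exact continuous_finset_sum _ fun i _ =>
        continuous_const.mul ((continuous_apply i).comp continuous_fst)
    obtain ⟨ps, hpsmem, hpsmax'⟩ := hcompact.exists_isMaxOn hne hcont.continuousOn
    have hpsmax : ∀ p' ∈ {p | p ∈ K ∧ L p = ct}, bt ⬝ᵥ p'.1 ≤ bt ⬝ᵥ ps.1 := fun p' hp' => hpsmax' hp'
    set ys := ps.1 with hys
    set ss := ps.2 with hss
    have hpsA : A.transpose.mulVec ys + ss = ct := by rw [← hLapp ps]; exact hpsmem.2
    have hssp : 0 ≤ ss := hpsmem.1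
    set g : Fin n → (Fin m → ℝ) :=
      fun j => if ss j = 0 then (fun i => A i j) else 0 with hg
    have hbt : bt ∈ coneOf g := by
      apply mem_of_dual
      intro u hu
      set w : Fin n → ℝ := A.transpose.mulVec u with hw
      have hwle : ∀ j, ss j = 0 → w j ≤ 0 := by
        intro j hj
        have h1 := hu j
        simp only [hg, hj, if_pos] at h1
        have e1 : u ⬝ᵥ (fun i => A i j) = w j := by
          simp [hw, Matrix.mulVec, dotProduct, Matrix.transpose_apply, mul_comm]
        rwa [e1] at h1
      by_contra hpos
      push_neg at hpos
      set Tp : Finset (Fin n) := Finset.univ.filter fun j => 0 < w j with hTp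
      have hsspos : ∀ j ∈ Tp, 0 < ss j := by
        intro j hj
        have hwj : 0 < w j := (Finset.mem_filter.mp hj).2
        rcases eq_or_lt_of_le (hssp j) with h | h
        · exact absurd hwj (not_lt.mpr (hwle j h.symm))
        · exact h
      set ε : ℝ := if hTpne : Tp.Nonempty then Tp.inf' hTpne (fun j => ss j / w j) else 1 with hε
      have hεpos : 0 < ε := by
        by_cases hTpne : Tp.Nonempty
        · rw [hε, dif_pos hTpne]
          rw [Finset.lt_inf'_iff]
          intro j hj
          exact div_pos (hsspos j hj) ((Finset.mem_filter.mp hj).2)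
        · rw [hε, dif_neg hTpne]; norm_num
      have hεle : ∀ j ∈ Tp, ε * w j ≤ ss j := by
        intro j hj
        have hwj : 0 < w j := (Finset.mem_filter.mp hj).2
        have h5 : ε ≤ ss j / w j := by
          rw [hε, dif_pos ⟨j, hj⟩]
          exact Finset.inf'_le _ hj
        calc ε * w j ≤ (ss j / w j) * w j := mul_le_mul_of_nonneg_right h5 hwj.le
          _ = ss j := div_mul_cancel₀ _ hwj.ne'
      set p' : (Fin m → ℝ) × (Fin n → ℝ) := (ys + ε • u, ss - ε • w) with hp'
      have hp'K : p' ∈ K := by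
        intro j
        show (0 : ℝ) ≤ ss j - ε * w j
        rcases le_or_gt (w j) 0 with h6 | h6
        · have h9 : ε * w j ≤ 0 := mul_nonpos_of_nonneg_of_nonpos hεpos.le h6
          have h7 : (0:ℝ) ≤ ss j := hssp j
          linarith
        · have hjT : j ∈ Tp := Finset.mem_filter.mpr ⟨Finset.mem_univ j, h6⟩
          linarith [hεle j hjT]
      have hLp' : L p' = ct := by
        rw [hLapp]
        show A.transpose.mulVec (ys + ε • u) + (ss - ε • w) = ct
        rw [Matrix.mulVec_add, Matrix.mulVec_smul]
        rw [← hw]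
        rw [← hpsA]
        abel
      have hmax := hpsmax p' ⟨hp'K, hLp'⟩
      have hvals : bt ⬝ᵥ p'.1 = bt ⬝ᵥ ys + ε * (bt ⬝ᵥ u) := by
        show bt ⬝ᵥ (ys + ε • u) = _
        rw [dotProduct_add, dotProduct_smul, smul_eq_mul]
      have hbu : 0 < bt ⬝ᵥ u := by rwa [dotProduct_comm] at hpos
      have : 0 < ε * (bt ⬝ᵥ u) := mul_pos hεpos hbu
      rw [hvals] at hmax
      linarith
    obtain ⟨l, hl0, hlsum⟩ := hbt
    refine ⟨fun j => if ss j = 0 then l j else 0, ys, ss, ?_, ?_, hpsA, hssp, ?_⟩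
    · funext i
      have hbti := congrFun hlsum i
      simp only [Finset.sum_apply, Pi.smul_apply, smul_eq_mul, hg] at hbti
      show (∑ j, A i j * (if ss j = 0 then l j else 0)) = bt i
      rw [hbti]
      refine Finset.sum_congr rfl fun j _ => ?_
      split
      · simp [mul_comm]
      · simp
    · intro j
      show (0:ℝ) ≤ if ss j = 0 then l j else 0
      split
      · exact hl0 _
      · exact le_rfl
    · intro j
      show (if ss j = 0 then l j else 0) * ss j = 0
      split
      · rename_i h; rw [show ss j = 0 from h, mul_zero]
      · simp

end LP

end AuxLP

/-- Under Assumption 1 (`U` compact, convex, containing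
`(0,0)`) and Assumption 2 (`P(0)` and `D(0)` nonempty, at least one bounded),
appending the complementarity constraint `x ∘ s = 0` (i.e. `xⱼsⱼ = 0` for all
`j`) changes neither the optimal value of the primal-dual bilinear program for
`q⁻` nor that for `q⁺`. -/
theorem complementarity_constraint_redundant (m n : ℕ)
    (Ahat : Matrix (Fin m) (Fin n) ℝ) (bhat : Fin m → ℝ) (chat : Fin n → ℝ)
    (U : Set ((Fin m → ℝ) × (Fin n → ℝ)))
    (hUcompact : IsCompact U) (hUconvex : Convex ℝ U) (hU0 : (0, 0) ∈ U)
    (hP0 : (Pfeas m n Ahat bhat 0).Nonempty) (hD0 : (Dfeas m n Ahat chat 0).Nonempty)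
    (hbdd : Bornology.IsBounded (Pfeas m n Ahat bhat 0) ∨
      Bornology.IsBounded (Dfeas m n Ahat chat 0)) :
    sInf {e : EReal | ∃ b c x y s, (b, c) ∈ U ∧
        Ahat.mulVec x = bhat + b ∧ 0 ≤ x ∧
        Ahat.transpose.mulVec y + s = chat + c ∧ 0 ≤ s ∧
        e = (((chat + c) ⬝ᵥ x : ℝ) : EReal)} =
      sInf {e : EReal | ∃ b c x y s, (b, c) ∈ U ∧
        Ahat.mulVec x = bhat + b ∧ 0 ≤ x ∧
        Ahat.transpose.mulVec y + s = chat + c ∧ 0 ≤ s ∧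
        (∀ j, x j * s j = 0) ∧
        e = (((chat + c) ⬝ᵥ x : ℝ) : EReal)} ∧
    sSup {e : EReal | ∃ b c x y s, (b, c) ∈ U ∧
        Ahat.mulVec x = bhat + b ∧ 0 ≤ x ∧
        Ahat.transpose.mulVec y + s = chat + c ∧ 0 ≤ s ∧
        e = (((bhat + b) ⬝ᵥ y : ℝ) : EReal)} =
      sSup {e : EReal | ∃ b c x y s, (b, c) ∈ U ∧
        Ahat.mulVec x = bhat + b ∧ 0 ≤ x ∧
        Ahat.transpose.mulVec y + s = chat + c ∧ 0 ≤ s ∧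
        (∀ j, x j * s j = 0) ∧
        e = (((bhat + b) ⬝ᵥ y : ℝ) : EReal)} := by
  classical
  have hrec : (∀ d : Fin n → ℝ, 0 ≤ d → Ahat.mulVec d = 0 → d = 0) ∨
      (∀ p : (Fin m → ℝ) × (Fin n → ℝ), 0 ≤ p.2 →
        Ahat.transpose.mulVec p.1 + p.2 = 0 → p = 0) := by
    rcases hbdd with h | h
    · left
      intro d hd hAd
      refine recession_of_bounded (Ahat.mulVecLin) {x | 0 ≤ x}
        (fun x hx y hy => show 0 ≤ x + y from add_nonneg hx hy) (fun t ht x hx => show 0 ≤ t • x from smul_nonneg ht hx)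
        (v0 := bhat + 0) ?_ ?_ d hd ?_
      · obtain ⟨x0, hx0⟩ := hP0
        exact ⟨x0, hx0.2, by rw [Matrix.mulVecLin_apply]; exact hx0.1⟩
      · have he : {x | x ∈ {x : Fin n → ℝ | 0 ≤ x} ∧ Ahat.mulVecLin x = bhat + 0}
            = Pfeas m n Ahat bhat 0 := by
          ext x; simp [Pfeas, Matrix.mulVecLin_apply, and_comm]
        rw [he]; exact h
      · rw [Matrix.mulVecLin_apply]; exact hAd
    · right
      intro p hp hAp
      refine recession_of_bounded
        (Ahat.transpose.mulVecLin.comp (LinearMap.fst ℝ (Fin m → ℝ) (Fin n → ℝ)) + LinearMap.snd ℝ (Fin m → ℝ) (Fin n → ℝ))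
        {p : (Fin m → ℝ) × (Fin n → ℝ) | 0 ≤ p.2}
        (fun x hx y hy => ?_) (fun t ht x hx => ?_)
        (v0 := chat + 0) ?_ ?_ p hp ?_
      · show 0 ≤ (x + y).2
        exact add_nonneg hx hy
      · show 0 ≤ (t • x).2
        rw [Prod.smul_snd]
        exact smul_nonneg ht hx
      · obtain ⟨p0, hp0⟩ := hD0
        refine ⟨p0, hp0.2, ?_⟩
        show Ahat.transpose.mulVecLin p0.1 + p0.2 = chat + 0
        rw [Matrix.mulVecLin_apply]
        exact hp0.1
      · have he : {q | q ∈ {p : (Fin m → ℝ) × (Fin n → ℝ) | 0 ≤ p.2} ∧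
            (Ahat.transpose.mulVecLin.comp (LinearMap.fst ℝ (Fin m → ℝ) (Fin n → ℝ)) + LinearMap.snd ℝ (Fin m → ℝ) (Fin n → ℝ)) q
              = chat + 0} = Dfeas m n Ahat chat 0 := by
          ext q
          show (0 ≤ q.2 ∧ Ahat.transpose.mulVecLin q.1 + q.2 = chat + 0) ↔ _
          rw [Matrix.mulVecLin_apply]
          simp [Dfeas, and_comm]
        rw [he]; exact h
      · show Ahat.transpose.mulVecLin p.1 + p.2 = 0
        rw [Matrix.mulVecLin_apply]
        exact hAp
  constructor
  · apply le_antisymm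
    · apply sInf_le_sInf
      rintro e ⟨b, c, x, y, s, h1, h2, h3, h4, h5, _, h7⟩
      exact ⟨b, c, x, y, s, h1, h2, h3, h4, h5, h7⟩
    · apply le_sInf
      rintro e ⟨b, c, x, y, s, hU, hAx, hx, hAys, hs, rfl⟩
      obtain ⟨x', y', s', hx'A, hx'p, hy'A, hs'p, hcomp⟩ :=
        exists_comp Ahat (bhat + b) (chat + c) hrec ⟨x, hAx, hx⟩ ⟨(y, s), hAys, hs⟩
      refine sInf_le_of_le (b := (((chat + c) ⬝ᵥ x' : ℝ) : EReal)) ?_ ?_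
      · exact ⟨b, c, x', y', s', hU, hx'A, hx'p, hy'A, hs'p, hcomp, rfl⟩
      rw [EReal.coe_le_coe_iff]
      calc (chat + c) ⬝ᵥ x' = (bhat + b) ⬝ᵥ y' := comp_value_eq Ahat hx'A hy'A hcomp
        _ ≤ (chat + c) ⬝ᵥ x := weak_duality Ahat hAx hx hy'A hs'p
  · apply le_antisymm
    · apply sSup_le
      rintro e ⟨b, c, x, y, s, hU, hAx, hx, hAys, hs, rfl⟩
      obtain ⟨x', y', s', hx'A, hx'p, hy'A, hs'p, hcomp⟩ :=
        exists_comp Ahat (bhat + b) (chat + c) hrec ⟨x, hAx, hx⟩ ⟨(y, s), hAys, hs⟩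
      refine le_sSup_of_le (b := (((bhat + b) ⬝ᵥ y' : ℝ) : EReal)) ?_ ?_
      · exact ⟨b, c, x', y', s', hU, hx'A, hx'p, hy'A, hs'p, hcomp, rfl⟩
      rw [EReal.coe_le_coe_iff]
      calc (bhat + b) ⬝ᵥ y ≤ (chat + c) ⬝ᵥ x' := weak_duality Ahat hx'A hx'p hAys hs
        _ = (bhat + b) ⬝ᵥ y' := comp_value_eq Ahat hx'A hy'A hcomp
    · apply sSup_le_sSup
      rintro e ⟨b, c, x, y, s, h1, h2, h3, h4, h5, _, h7⟩
      exact ⟨b, c, x, y, s, h1, h2, h3, h4, h5, h7⟩
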